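/- Let k be a field, R = k[x_1,…,x_n], and let Δ be a simplicial complex on the vertex set {x_1,…,x_n} with facet ideal I = F(Δ). An ideal p = (x_{i_1},…,x_{i_s}) generated by a subset of the variables is a minimal prime of I if and only if {x_{i_1},…,x_{i_s}} is a minimal vertex cover of Δ. -/

import Mathlib

open MvPolynomial

/-- `Δ` is the facet set of a simplicial complex: facets are nonempty and
none of them contains another. -/
def IsFacetFamily {V : Type*} [DecidableEq V] (Δ : Finset (Finset V)) : Prop :=
  (∀ F ∈ Δ, F.Nonempty) ∧ ∀ F ∈ Δ, ∀ G ∈ Δ, F ⊆ G → F = G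

/-- `A` is a vertex cover of the simplicial complex with facet set `Δ`. -/
def IsVertexCover {V : Type*} [DecidableEq V] (Δ : Finset (Finset V)) (A : Finset V) : Prop :=
  ∀ F ∈ Δ, ∃ v ∈ A, v ∈ F

/-- `A` is a minimal vertex cover of the simplicial complex with facet set `Δ`. -/
def IsMinimalVertexCover {V : Type*} [DecidableEq V] (Δ : Finset (Finset V))
    (A : Finset V) : Prop :=
  IsVertexCover Δ A ∧ ∀ B ⊆ A, IsVertexCover Δ B → B = A

/-- The facet ideal of the simplicial complex with facet set `Δ`, generated by the
squarefree monomials corresponding to the facets. -/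
noncomputable def facetIdeal (k : Type*) [Field k] {n : ℕ} (Δ : Finset (Finset (Fin n))) :
    Ideal (MvPolynomial (Fin n) k) :=
  Ideal.span ((fun F : Finset (Fin n) => ∏ i ∈ F, X i) '' ↑Δ)

section Aux

variable (k : Type*) [Field k] {n : ℕ}

lemma sub_aeval_mem (A : Finset (Fin n)) (p : MvPolynomial (Fin n) k) :
    p - aeval (fun i => if i ∈ A then 0 else X i) p ∈
      Ideal.span ((X : Fin n → MvPolynomial (Fin n) k) '' ↑A) := by
  induction p using MvPolynomial.induction_on with
  | C a => simp
  | add p q hp hq =>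
    rw [map_add]
    have : p + q - (aeval (fun i => if i ∈ A then 0 else X i) p +
        aeval (fun i => if i ∈ A then 0 else X i) q) =
        (p - aeval (fun i => if i ∈ A then 0 else X i) p) +
        (q - aeval (fun i => if i ∈ A then 0 else X i) q) := by ring
    rw [this]
    exact Ideal.add_mem _ hp hq
  | mul_X p i hp =>
    rw [map_mul, aeval_X]
    by_cases hi : i ∈ A
    · simp only [hi, if_true, mul_zero, sub_zero]
      exact Ideal.mul_mem_left _ p (Ideal.subset_span ⟨i, hi, rfl⟩)
    · simp only [hi, if_false]
      have : p * X i - aeval (fun i => if i ∈ A then 0 else X i) p * X i =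
          (p - aeval (fun i => if i ∈ A then 0 else X i) p) * X i := by ring
      rw [this]
      exact Ideal.mul_mem_right _ _ hp

lemma isPrime_span_X_image (A : Finset (Fin n)) :
    (Ideal.span ((X : Fin n → MvPolynomial (Fin n) k) '' ↑A)).IsPrime := by
  have hker : Ideal.span ((X : Fin n → MvPolynomial (Fin n) k) '' ↑A) =
      RingHom.ker (aeval (fun i => if i ∈ A then 0 else X i) :
        MvPolynomial (Fin n) k →ₐ[k] MvPolynomial (Fin n) k).toRingHom := by
    apply le_antisymm
    · rw [Ideal.span_le]
      rintro _ ⟨i, hi, rfl⟩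
      simp [RingHom.mem_ker, Finset.mem_coe.mp hi]
    · intro p hp
      rw [RingHom.mem_ker] at hp
      have := sub_aeval_mem k A p
      rwa [show (aeval (fun i => if i ∈ A then 0 else X i) :
          MvPolynomial (Fin n) k →ₐ[k] MvPolynomial (Fin n) k) p = 0 from hp, sub_zero] at this
  rw [hker]
  exact RingHom.ker_isPrime _

lemma X_mem_span_X_image_iff (A : Finset (Fin n)) (i : Fin n) :
    (X i : MvPolynomial (Fin n) k) ∈
      Ideal.span ((X : Fin n → MvPolynomial (Fin n) k) '' ↑A) ↔ i ∈ A := by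
  constructor
  · intro h
    rw [mem_ideal_span_X_image] at h
    obtain ⟨j, hj, hji⟩ := h (Finsupp.single i 1) (by simp [support_X])
    rcases Finsupp.single_apply_ne_zero.mp hji with ⟨rfl, -⟩
    exact hj
  · intro h
    exact Ideal.subset_span ⟨i, h, rfl⟩

lemma facetIdeal_le_iff (Δ : Finset (Finset (Fin n)))
    (Q : Ideal (MvPolynomial (Fin n) k)) (hQ : Q.IsPrime) :
    facetIdeal k Δ ≤ Q ↔ ∀ F ∈ Δ, ∃ i ∈ F, (X i : MvPolynomial (Fin n) k) ∈ Q := by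
  rw [facetIdeal, Ideal.span_le, Set.image_subset_iff]
  haveI := hQ
  constructor
  · intro h F hF
    have := h hF
    simp only [Set.mem_preimage, SetLike.mem_coe] at this
    exact Ideal.IsPrime.prod_mem_iff.mp this
  · intro h F hF
    simp only [Set.mem_preimage, SetLike.mem_coe]
    exact Ideal.IsPrime.prod_mem_iff.mpr (h F hF)

end Aux

/-- An ideal generated by a subset of the variables is a minimal prime of the
facet ideal `F(Δ)` iff the corresponding set of vertices is a minimal vertex
cover of `Δ`. -/
theorem span_mem_minimalPrimes_facetIdeal_iff
    (k : Type*) [Field k] {n : ℕ} (Δ : Finset (Finset (Fin n)))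
    (hΔ : IsFacetFamily Δ) (A : Finset (Fin n)) :
    Ideal.span ((X : Fin n → MvPolynomial (Fin n) k) '' ↑A) ∈
        (facetIdeal k Δ).minimalPrimes ↔
      IsMinimalVertexCover Δ A := by
  classical
  have hP : (Ideal.span ((X : Fin n → MvPolynomial (Fin n) k) '' ↑A)).IsPrime :=
    isPrime_span_X_image k A
  constructor
  · intro h
    obtain ⟨⟨hprime, hle⟩, hmin⟩ := h
    have hcov : IsVertexCover Δ A := by
      intro F hF
      obtain ⟨i, hiF, hiP⟩ := (facetIdeal_le_iff k Δ _ hprime).mp hle F hF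
      exact ⟨i, (X_mem_span_X_image_iff k A i).mp hiP, hiF⟩
    refine ⟨hcov, fun B hBA hBcov => ?_⟩
    have hBprime := isPrime_span_X_image k B
    have hBle : facetIdeal k Δ ≤ Ideal.span ((X : Fin n → MvPolynomial (Fin n) k) '' ↑B) := by
      rw [facetIdeal_le_iff k Δ _ hBprime]
      intro F hF
      obtain ⟨v, hvB, hvF⟩ := hBcov F hF
      exact ⟨v, hvF, (X_mem_span_X_image_iff k B v).mpr hvB⟩
    have hsub : Ideal.span ((X : Fin n → MvPolynomial (Fin n) k) '' ↑B) ≤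
        Ideal.span ((X : Fin n → MvPolynomial (Fin n) k) '' ↑A) :=
      Ideal.span_mono (Set.image_mono hBA)
    have := hmin ⟨hBprime, hBle⟩ hsub
    apply Finset.Subset.antisymm hBA
    intro i hiA
    exact (X_mem_span_X_image_iff k B i).mp
      (this ((X_mem_span_X_image_iff k A i).mpr hiA))
  · rintro ⟨hcov, hmin⟩
    constructor
    · refine ⟨hP, ?_⟩
      rw [facetIdeal_le_iff k Δ _ hP]
      intro F hF
      obtain ⟨v, hvA, hvF⟩ := hcov F hF
      exact ⟨v, hvF, (X_mem_span_X_image_iff k A v).mpr hvA⟩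
    · rintro Q ⟨hQprime, hQle⟩ hQP
      set B : Finset (Fin n) := A.filter (fun i => (X i : MvPolynomial (Fin n) k) ∈ Q) with hB
      have hBA : B ⊆ A := Finset.filter_subset _ _
      have hBcov : IsVertexCover Δ B := by
        intro F hF
        obtain ⟨i, hiF, hiQ⟩ := (facetIdeal_le_iff k Δ _ hQprime).mp hQle F hF
        have hiA : i ∈ A := (X_mem_span_X_image_iff k A i).mp (hQP hiQ)
        exact ⟨i, Finset.mem_filter.mpr ⟨hiA, hiQ⟩, hiF⟩
      have hBAeq : B = A := hmin B hBA hBcov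
      rw [Ideal.span_le]
      rintro _ ⟨i, hiA, rfl⟩
      have : i ∈ B := hBAeq ▸ hiA
      exact (Finset.mem_filter.mp this).2
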